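/- arXiv:2103.10864 — 2 statements merged into one kernel-verified Lean document; each statement's English description precedes it below -/
import Mathlib

section
/- Let u : ℝ × ℝ^3 → ℝ^3 be a smooth real Schur flow in three dimensions (∂_3 u_1 = ∂_3 u_2 = 0) satisfying the barotropic Euler equation with smooth potential Π. Then the horizontal velocity 1-form satisfies the two-dimensional momentum equation: for a ∈ {1, 2}, ∂_t u_a + Σ_{b=1}^{2} ( u_b ∂_b u_a + u_b ∂_a u_b ) = −∂_a ( Π − (u_1² + u_2²)/2 ). -/
/-- Partial derivative in time of a function on `ℝ × ℝ^3`. -/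
noncomputable def pdt (f : ℝ × (Fin 3 → ℝ) → ℝ) (p : ℝ × (Fin 3 → ℝ)) : ℝ :=
  fderiv ℝ f p (1, 0)

/-- Partial derivative in the `j`-th spatial coordinate of a function on `ℝ × ℝ^3`. -/
noncomputable def pdx (j : Fin 3) (f : ℝ × (Fin 3 → ℝ) → ℝ) (p : ℝ × (Fin 3 → ℝ)) : ℝ :=
  fderiv ℝ f p (0, Pi.single j 1)

lemma pdx_aux (u0 u1 P : ℝ × (Fin 3 → ℝ) → ℝ)
    (h0 : ContDiff ℝ (⊤ : ℕ∞) u0) (h1 : ContDiff ℝ (⊤ : ℕ∞) u1)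
    (hP : ContDiff ℝ (⊤ : ℕ∞) P) (a : Fin 3) (p : ℝ × (Fin 3 → ℝ)) :
    pdx a (fun q => P q - (u0 q ^ 2 + u1 q ^ 2) / 2) p
      = pdx a P p - (u0 p * pdx a u0 p + u1 p * pdx a u1 p) := by
  have d0 := (h0.differentiable (by simp) p).hasFDerivAt
  have d1 := (h1.differentiable (by simp) p).hasFDerivAt
  have dP := (hP.differentiable (by simp) p).hasFDerivAt
  have hsq : HasFDerivAt (fun q => u0 q ^ 2 + u1 q ^ 2)
      ((u0 p • fderiv ℝ u0 p + u0 p • fderiv ℝ u0 p)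
        + (u1 p • fderiv ℝ u1 p + u1 p • fderiv ℝ u1 p)) p := by
    have := (d0.mul d0).add (d1.mul d1); simp [pow_two] at this ⊢; exact this
  have h : HasFDerivAt (fun q => P q - (u0 q ^ 2 + u1 q ^ 2) / 2)
      (fderiv ℝ P p - (2:ℝ)⁻¹ • ((u0 p • fderiv ℝ u0 p + u0 p • fderiv ℝ u0 p)
        + (u1 p • fderiv ℝ u1 p + u1 p • fderiv ℝ u1 p))) p := by
    have := dP.sub (hsq.const_mul (2:ℝ)⁻¹); simp [div_eq_inv_mul] at this ⊢; exact this
  simp only [pdx, h.fderiv, ContinuousLinearMap.sub_apply, ContinuousLinearMap.add_apply,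
    ContinuousLinearMap.smul_apply, smul_eq_mul]
  ring

/-- for a 3D real Schur flow (`∂_3 u_1 = ∂_3 u_2 = 0`) solving the barotropic
Euler equation, the horizontal velocity 1-form satisfies the 2D momentum equation
`∂_t u_a + Σ_{b=1}^2 (u_b ∂_b u_a + u_b ∂_a u_b) = −∂_a (Π − |u_h|²/2)` for `a ∈ {1,2}`. -/
theorem rsf3d_horizontal_momentum
    (u : Fin 3 → ℝ × (Fin 3 → ℝ) → ℝ) (P : ℝ × (Fin 3 → ℝ) → ℝ)
    (hu : ∀ k, ContDiff ℝ (⊤ : ℕ∞) (u k)) (hP : ContDiff ℝ (⊤ : ℕ∞) P)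
    (hRSF : (∀ p, pdx 2 (u 0) p = 0) ∧ (∀ p, pdx 2 (u 1) p = 0))
    (heuler : ∀ k p, pdt (u k) p + ∑ j, u j p * pdx j (u k) p = -(pdx k P p)) :
    ∀ a : Fin 3, a = 0 ∨ a = 1 → ∀ p,
      pdt (u a) p
        + ∑ b ∈ ({0, 1} : Finset (Fin 3)), (u b p * pdx b (u a) p + u b p * pdx a (u b) p)
        = -(pdx a (fun q => P q - (u 0 q ^ 2 + u 1 q ^ 2) / 2) p) := by
  intro a ha p
  rw [pdx_aux (u 0) (u 1) P (hu 0) (hu 1) hP a p]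
  have he := heuler a p
  rw [Fin.sum_univ_three] at he
  have hz : pdx 2 (u a) p = 0 := by
    rcases ha with h | h <;> subst h
    · exact hRSF.1 p
    · exact hRSF.2 p
  rw [hz, mul_zero, add_zero] at he
  have : ({0, 1} : Finset (Fin 3)) = {0} ∪ {1} := rfl
  rw [this]
  rw [Finset.sum_union (by decide)]
  simp only [Finset.sum_singleton]
  linarith
end

section
/- (Two Helmholtz laws in 3D.) Let u : ℝ × ℝ^3 → ℝ^3 be a smooth real Schur flow (∂_3 u_1 = ∂_3 u_2 = 0) satisfying the compressible barotropic Euler equation with smooth potential Π. Define the horizontal vorticity 2-form Ω_h with components (Ω_h)_{12} = −(Ω_h)_{21} = ∂_1 u_2 − ∂_2 u_1 and all other components zero, and the complementary 2-form Ω_z with components (Ω_z)_{j3} = −(Ω_z)_{3j} = ∂_j u_3 for j ∈ {1, 2} and (Ω_z)_{12} = (Ω_z)_{21} = 0. Then: (a) Ω_h is Lie-transported by u; (b) Ω_z is Lie-transported by u; and (c) Ω_h + Ω_z equals the full vorticity ω_{jk} = ∂_j u_k − ∂_k u_j of u. -/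
/-- An antisymmetric 2-form field `a` is Lie-transported by `u`. -/
def LieTransported (u : Fin 3 → ℝ × (Fin 3 → ℝ) → ℝ)
    (a : Fin 3 → Fin 3 → ℝ × (Fin 3 → ℝ) → ℝ) : Prop :=
  ∀ (j k : Fin 3) p, pdt (a j k) p
    + ∑ m : Fin 3, (u m p * pdx m (a j k) p + a m k p * pdx j (u m) p + a j m p * pdx k (u m) p)
    = 0

namespace RSFHelper

abbrev V := ℝ × (Fin 3 → ℝ)

/-- Directional derivative. -/
noncomputable def dd (v : V) (f : V → ℝ) (p : V) : ℝ := fderiv ℝ f p v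

/-- Time direction. -/
def et : V := (1, 0)

/-- Spatial directions. -/
def e (j : Fin 3) : V := (0, Pi.single j 1)

lemma pdt_eq (f : V → ℝ) (p : V) : pdt f p = dd et f p := rfl

lemma pdx_eq (j : Fin 3) (f : V → ℝ) (p : V) : pdx j f p = dd (e j) f p := rfl

lemma contDiff_dd {f : V → ℝ} (hf : ContDiff ℝ (⊤ : ℕ∞) f) (v : V) :
    ContDiff ℝ (⊤ : ℕ∞) (dd v f) := by
  have h1 : ContDiff ℝ (⊤ : ℕ∞) (fderiv ℝ f) :=
    hf.fderiv_right (m := (⊤ : ℕ∞)) (by exact_mod_cast (le_top : (⊤+1 : ℕ∞) ≤ ⊤))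
  exact h1.clm_apply contDiff_const

lemma diff_dd {f : V → ℝ} (hf : ContDiff ℝ (⊤ : ℕ∞) f) (v : V) (p : V) :
    DifferentiableAt ℝ (dd v f) p :=
  ((contDiff_dd hf v).differentiable (by simp)).differentiableAt

lemma diff_of_contDiff {f : V → ℝ} (hf : ContDiff ℝ (⊤ : ℕ∞) f) (p : V) :
    DifferentiableAt ℝ f p :=
  (hf.differentiable (by simp)).differentiableAt

lemma dd_comm {f : V → ℝ} (hf : ContDiff ℝ (⊤ : ℕ∞) f) (v w p : V) :
    dd v (dd w f) p = dd w (dd v f) p := by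
  have hd : DifferentiableAt ℝ (fderiv ℝ f) p :=
    ((hf.fderiv_right (m := (⊤ : ℕ∞)) (by exact_mod_cast (le_top : (⊤+1 : ℕ∞) ≤ ⊤))).differentiable
      (by simp)).differentiableAt
  have key : ∀ a b : V, dd a (dd b f) p = fderiv ℝ (fderiv ℝ f) p a b := by
    intro a b
    have h2 : dd b f = fun q => (fderiv ℝ f q) b := rfl
    rw [dd, h2, fderiv_clm_apply hd (differentiableAt_const b)]
    simp
  rw [key, key]
  exact (hf.contDiffAt.isSymmSndFDerivAt (by rw [minSmoothness_of_isRCLikeNormedField]; exact WithTop.coe_le_coe.mpr (le_top : (2:ℕ∞) ≤ ⊤))).eq v w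

lemma dd_add {f g : V → ℝ} {p : V} (hf : DifferentiableAt ℝ f p)
    (hg : DifferentiableAt ℝ g p) (v : V) :
    dd v (fun q => f q + g q) p = dd v f p + dd v g p := by
  simp only [dd, fderiv_fun_add hf hg]; rfl

lemma dd_sub {f g : V → ℝ} {p : V} (hf : DifferentiableAt ℝ f p)
    (hg : DifferentiableAt ℝ g p) (v : V) :
    dd v (fun q => f q - g q) p = dd v f p - dd v g p := by
  simp only [dd, fderiv_fun_sub hf hg]; rfl

lemma dd_neg (f : V → ℝ) (v p : V) : dd v (fun q => -(f q)) p = -(dd v f p) := by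
  simp only [dd, fderiv_fun_neg]; rfl

@[simp] lemma dd_zero (v p : V) : dd v (fun _ : V => (0:ℝ)) p = 0 := by
  simp only [dd]; rw [fderiv_fun_const]; rfl

lemma dd_mul {f g : V → ℝ} {p : V} (hf : DifferentiableAt ℝ f p)
    (hg : DifferentiableAt ℝ g p) (v : V) :
    dd v (fun q => f q * g q) p = f p * dd v g p + dd v f p * g p := by
  simp only [dd, fderiv_fun_mul hf hg]; simp; ring

lemma dd_expand5 {a b f0 f1 f2 g0 g1 g2 : V → ℝ} {p : V} (v : V)
    (ha : DifferentiableAt ℝ a p) (hb : DifferentiableAt ℝ b p)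
    (hf0 : DifferentiableAt ℝ f0 p) (hf1 : DifferentiableAt ℝ f1 p)
    (hf2 : DifferentiableAt ℝ f2 p)
    (hg0 : DifferentiableAt ℝ g0 p) (hg1 : DifferentiableAt ℝ g1 p)
    (hg2 : DifferentiableAt ℝ g2 p) :
    dd v (fun q => a q + (f0 q * g0 q + (f1 q * g1 q + f2 q * g2 q)) + b q) p
      = dd v a p + (f0 p * dd v g0 p + dd v f0 p * g0 p
          + (f1 p * dd v g1 p + dd v f1 p * g1 p
            + (f2 p * dd v g2 p + dd v f2 p * g2 p))) + dd v b p := by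
  have d0 : DifferentiableAt ℝ (fun q => f0 q * g0 q) p := hf0.mul hg0
  have d1 : DifferentiableAt ℝ (fun q => f1 q * g1 q) p := hf1.mul hg1
  have d2 : DifferentiableAt ℝ (fun q => f2 q * g2 q) p := hf2.mul hg2
  have d12 : DifferentiableAt ℝ (fun q => f1 q * g1 q + f2 q * g2 q) p := d1.add d2
  have d012 : DifferentiableAt ℝ (fun q => f0 q * g0 q + (f1 q * g1 q + f2 q * g2 q)) p :=
    d0.add d12
  have dad : DifferentiableAt ℝ (fun q => a q + (f0 q * g0 q + (f1 q * g1 q + f2 q * g2 q))) p :=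
    ha.add d012
  rw [dd_add (f := fun q => a q + (f0 q * g0 q + (f1 q * g1 q + f2 q * g2 q))) (g := b) dad hb,
    dd_add (f := a) (g := fun q => f0 q * g0 q + (f1 q * g1 q + f2 q * g2 q)) ha d012,
    dd_add (f := fun q => f0 q * g0 q) (g := fun q => f1 q * g1 q + f2 q * g2 q) d0 d12,
    dd_add (f := fun q => f1 q * g1 q) (g := fun q => f2 q * g2 q) d1 d2,
    dd_mul hf0 hg0, dd_mul hf1 hg1, dd_mul hf2 hg2]

end RSFHelper

open RSFHelper in
/-- Two Helmholtz laws in 3D: for a 3D real Schur flow solving the compressible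
barotropic Euler equation, the horizontal vorticity `Ω_h` and the complementary 2-form `Ω_z`
are each Lie-transported by `u`, and their sum is the full vorticity. -/
theorem rsf3d_two_helmholtz_laws
    (u : Fin 3 → ℝ × (Fin 3 → ℝ) → ℝ) (P : ℝ × (Fin 3 → ℝ) → ℝ)
    (hu : ∀ k, ContDiff ℝ (⊤ : ℕ∞) (u k)) (hP : ContDiff ℝ (⊤ : ℕ∞) P)
    (hRSF : (∀ p, pdx 2 (u 0) p = 0) ∧ (∀ p, pdx 2 (u 1) p = 0))
    (heuler : ∀ k p, pdt (u k) p + ∑ j, u j p * pdx j (u k) p = -(pdx k P p))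
    (Ωh : Fin 3 → Fin 3 → ℝ × (Fin 3 → ℝ) → ℝ)
    (hΩh : ∀ j k : Fin 3, ∀ p, Ωh j k p =
      if j = 0 ∧ k = 1 then pdx 0 (u 1) p - pdx 1 (u 0) p
      else if j = 1 ∧ k = 0 then -(pdx 0 (u 1) p - pdx 1 (u 0) p)
      else 0)
    (Ωz : Fin 3 → Fin 3 → ℝ × (Fin 3 → ℝ) → ℝ)
    (hΩz : ∀ j k : Fin 3, ∀ p, Ωz j k p =
      if k = 2 ∧ j ≠ 2 then pdx j (u 2) p
      else if j = 2 ∧ k ≠ 2 then -(pdx k (u 2) p)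
      else 0) :
    LieTransported u Ωh ∧ LieTransported u Ωz ∧
      (∀ (j k : Fin 3) p, Ωh j k p + Ωz j k p = pdx j (u k) p - pdx k (u j) p) := by
  obtain ⟨hz0p, hz1p⟩ := hRSF
  -- RSF in dd form
  have hz0 : dd (e 2) (u 0) = fun _ => (0:ℝ) := funext fun q => hz0p q
  have hz1 : dd (e 2) (u 1) = fun _ => (0:ℝ) := funext fun q => hz1p q
  have hz0' : ∀ q, dd (e 2) (u 0) q = 0 := hz0p
  have hz1' : ∀ q, dd (e 2) (u 1) q = 0 := hz1p
  -- the differentiated Euler equation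
  have hE : ∀ (k : Fin 3) (w : V) (p : V),
      dd w (dd et (u k)) p
      + (u 0 p * dd w (dd (e 0) (u k)) p + dd w (u 0) p * dd (e 0) (u k) p
        + (u 1 p * dd w (dd (e 1) (u k)) p + dd w (u 1) p * dd (e 1) (u k) p
          + (u 2 p * dd w (dd (e 2) (u k)) p + dd w (u 2) p * dd (e 2) (u k) p)))
      + dd w (dd (e k) P) p = 0 := by
    intro k w p
    have hzero : (fun q => dd et (u k) q
        + (u 0 q * dd (e 0) (u k) q + (u 1 q * dd (e 1) (u k) q + u 2 q * dd (e 2) (u k) q))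
        + dd (e k) P q) = fun _ => (0:ℝ) := by
      funext q
      have h := heuler k q
      rw [Fin.sum_univ_three] at h
      show pdt (u k) q + (u 0 q * pdx 0 (u k) q + (u 1 q * pdx 1 (u k) q
        + u 2 q * pdx 2 (u k) q)) + pdx k P q = 0
      linarith [h]
    have h0 : dd w (fun q => dd et (u k) q
        + (u 0 q * dd (e 0) (u k) q + (u 1 q * dd (e 1) (u k) q + u 2 q * dd (e 2) (u k) q))
        + dd (e k) P q) p = 0 := by rw [hzero, dd_zero]
    rw [dd_expand5 w (diff_dd (hu k) et p) (diff_dd hP (e k) p)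
      (diff_of_contDiff (hu 0) p) (diff_of_contDiff (hu 1) p) (diff_of_contDiff (hu 2) p)
      (diff_dd (hu k) (e 0) p) (diff_dd (hu k) (e 1) p) (diff_dd (hu k) (e 2) p)] at h0
    linarith [h0]
  -- second spatial derivatives of P vanish in direction 2 crossed with 0,1
  have hP20 : ∀ p, dd (e 2) (dd (e 0) P) p = 0 := by
    intro p
    have E := hE 0 (e 2) p
    rw [dd_comm (hu 0) (e 2) et p, dd_comm (hu 0) (e 2) (e 0) p,
      dd_comm (hu 0) (e 2) (e 1) p, hz0, hz1' p] at E
    simp only [dd_zero, mul_zero, zero_mul, add_zero, zero_add] at E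
    linarith [E]
  have hP21 : ∀ p, dd (e 2) (dd (e 1) P) p = 0 := by
    intro p
    have E := hE 1 (e 2) p
    rw [dd_comm (hu 1) (e 2) et p, dd_comm (hu 1) (e 2) (e 0) p,
      dd_comm (hu 1) (e 2) (e 1) p, hz1, hz0' p] at E
    simp only [dd_zero, mul_zero, zero_mul, add_zero, zero_add] at E
    linarith [E]
  have hP02 : ∀ p, dd (e 0) (dd (e 2) P) p = 0 :=
    fun p => (dd_comm hP (e 0) (e 2) p).trans (hP20 p)
  have hP12 : ∀ p, dd (e 1) (dd (e 2) P) p = 0 :=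
    fun p => (dd_comm hP (e 1) (e 2) p).trans (hP21 p)
  -- component functions of Ωh
  have Ph00 : Ωh 0 0 = fun _ => (0:ℝ) := funext fun q => by
    rw [hΩh, if_neg (by decide), if_neg (by decide)]
  have Ph01 : Ωh 0 1 = fun q => dd (e 0) (u 1) q - dd (e 1) (u 0) q := funext fun q => by
    rw [hΩh, if_pos ⟨rfl, rfl⟩]; rfl
  have Ph02 : Ωh 0 2 = fun _ => (0:ℝ) := funext fun q => by
    rw [hΩh, if_neg (by decide), if_neg (by decide)]
  have Ph10 : Ωh 1 0 = fun q => -(dd (e 0) (u 1) q - dd (e 1) (u 0) q) := funext fun q => by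
    rw [hΩh, if_neg (by decide), if_pos ⟨rfl, rfl⟩]; rfl
  have Ph11 : Ωh 1 1 = fun _ => (0:ℝ) := funext fun q => by
    rw [hΩh, if_neg (by decide), if_neg (by decide)]
  have Ph12 : Ωh 1 2 = fun _ => (0:ℝ) := funext fun q => by
    rw [hΩh, if_neg (by decide), if_neg (by decide)]
  have Ph20 : Ωh 2 0 = fun _ => (0:ℝ) := funext fun q => by
    rw [hΩh, if_neg (by decide), if_neg (by decide)]
  have Ph21 : Ωh 2 1 = fun _ => (0:ℝ) := funext fun q => by
    rw [hΩh, if_neg (by decide), if_neg (by decide)]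
  have Ph22 : Ωh 2 2 = fun _ => (0:ℝ) := funext fun q => by
    rw [hΩh, if_neg (by decide), if_neg (by decide)]
  -- component functions of Ωz
  have Pz00 : Ωz 0 0 = fun _ => (0:ℝ) := funext fun q => by
    rw [hΩz, if_neg (by decide), if_neg (by decide)]
  have Pz01 : Ωz 0 1 = fun _ => (0:ℝ) := funext fun q => by
    rw [hΩz, if_neg (by decide), if_neg (by decide)]
  have Pz02 : Ωz 0 2 = fun q => dd (e 0) (u 2) q := funext fun q => by
    rw [hΩz, if_pos ⟨rfl, by decide⟩]; rfl
  have Pz10 : Ωz 1 0 = fun _ => (0:ℝ) := funext fun q => by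
    rw [hΩz, if_neg (by decide), if_neg (by decide)]
  have Pz11 : Ωz 1 1 = fun _ => (0:ℝ) := funext fun q => by
    rw [hΩz, if_neg (by decide), if_neg (by decide)]
  have Pz12 : Ωz 1 2 = fun q => dd (e 1) (u 2) q := funext fun q => by
    rw [hΩz, if_pos ⟨rfl, by decide⟩]; rfl
  have Pz20 : Ωz 2 0 = fun q => -(dd (e 0) (u 2) q) := funext fun q => by
    rw [hΩz, if_neg (by decide), if_pos ⟨rfl, by decide⟩]; rfl
  have Pz21 : Ωz 2 1 = fun q => -(dd (e 1) (u 2) q) := funext fun q => by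
    rw [hΩz, if_neg (by decide), if_pos ⟨rfl, by decide⟩]; rfl
  have Pz22 : Ωz 2 2 = fun _ => (0:ℝ) := funext fun q => by
    rw [hΩz, if_neg (by decide), if_neg (by decide)]
  -- derivative of the vorticity function
  have hdω : ∀ (v p : V), dd v (fun q => dd (e 0) (u 1) q - dd (e 1) (u 0) q) p
      = dd v (dd (e 0) (u 1)) p - dd v (dd (e 1) (u 0)) p :=
    fun v p => dd_sub (diff_dd (hu 1) (e 0) p) (diff_dd (hu 0) (e 1) p) v
  have hdωn : ∀ (v p : V), dd v (fun q => -(dd (e 0) (u 1) q - dd (e 1) (u 0) q)) p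
      = -(dd v (dd (e 0) (u 1)) p - dd v (dd (e 1) (u 0)) p) := by
    intro v p
    rw [dd_neg (fun q => dd (e 0) (u 1) q - dd (e 1) (u 0) q) v p, hdω]
  have hdz0 : ∀ (v p : V), dd v (fun q => -(dd (e 0) (u 2) q)) p
      = -(dd v (dd (e 0) (u 2)) p) := fun v p => dd_neg (dd (e 0) (u 2)) v p
  have hdz1 : ∀ (v p : V), dd v (fun q => -(dd (e 1) (u 2) q)) p
      = -(dd v (dd (e 1) (u 2)) p) := fun v p => dd_neg (dd (e 1) (u 2)) v p
  refine ⟨?_, ?_, ?_⟩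
  · -- Ωh is Lie-transported
    intro j k p
    simp only [Fin.sum_univ_three]
    fin_cases j <;> fin_cases k <;>
      simp only [Fin.zero_eta, Fin.mk_one, Fin.reduceFinMk, Fin.isValue, Ph00, Ph01, Ph02, Ph10, Ph11, Ph12, Ph20, Ph21, Ph22,
        pdt_eq, pdx_eq]
    -- (0,0)
    · simp only [dd_zero, hdω, hdωn, mul_zero, zero_mul, add_zero, zero_add] <;> ring
    -- (0,1)
    · rw [hdω, hdω, hdω, hdω]
      have E01 := hE 1 (e 0) p
      have E10 := hE 0 (e 1) p
      rw [dd_comm (hu 1) (e 0) et p, dd_comm (hu 1) (e 0) (e 1) p,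
        dd_comm (hu 1) (e 0) (e 2) p, hz1' p] at E01
      rw [dd_comm (hu 0) (e 1) et p, dd_comm (hu 0) (e 1) (e 0) p,
        dd_comm (hu 0) (e 1) (e 2) p, hz0' p, dd_comm hP (e 1) (e 0) p] at E10
      linear_combination E01 - E10
    -- (0,2)
    · simp only [dd_zero, hdω, hdωn, mul_zero, zero_mul, add_zero, zero_add, hz0' p, hz1' p] <;> ring
    -- (1,0)
    · rw [hdωn, hdωn, hdωn, hdωn]
      have E01 := hE 1 (e 0) p
      have E10 := hE 0 (e 1) p
      rw [dd_comm (hu 1) (e 0) et p, dd_comm (hu 1) (e 0) (e 1) p,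
        dd_comm (hu 1) (e 0) (e 2) p, hz1' p] at E01
      rw [dd_comm (hu 0) (e 1) et p, dd_comm (hu 0) (e 1) (e 0) p,
        dd_comm (hu 0) (e 1) (e 2) p, hz0' p, dd_comm hP (e 1) (e 0) p] at E10
      linear_combination E10 - E01
    -- (1,1)
    · simp only [dd_zero, hdω, hdωn, mul_zero, zero_mul, add_zero, zero_add] <;> ring
    -- (1,2)
    · simp only [dd_zero, hdω, hdωn, mul_zero, zero_mul, add_zero, zero_add, hz0' p, hz1' p] <;> ring
    -- (2,0)
    · simp only [dd_zero, hdω, hdωn, mul_zero, zero_mul, add_zero, zero_add, hz0' p, hz1' p] <;> ring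
    -- (2,1)
    · simp only [dd_zero, hdω, hdωn, mul_zero, zero_mul, add_zero, zero_add, hz0' p, hz1' p] <;> ring
    -- (2,2)
    · simp only [dd_zero, hdω, hdωn, mul_zero, zero_mul, add_zero, zero_add] <;> ring
  · -- Ωz is Lie-transported
    intro j k p
    simp only [Fin.sum_univ_three]
    fin_cases j <;> fin_cases k <;>
      simp only [Fin.zero_eta, Fin.mk_one, Fin.reduceFinMk, Fin.isValue, Pz00, Pz01, Pz02, Pz10, Pz11, Pz12, Pz20, Pz21, Pz22,
        pdt_eq, pdx_eq]
    -- (0,0)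
    · simp only [dd_zero, hdz0, hdz1, mul_zero, zero_mul, add_zero, zero_add] <;> ring
    -- (0,1)
    · simp only [dd_zero, hdz0, hdz1, mul_zero, zero_mul, add_zero, zero_add] <;> ring
    -- (0,2)
    · have E := hE 2 (e 0) p
      rw [dd_comm (hu 2) (e 0) et p, dd_comm (hu 2) (e 0) (e 1) p,
        dd_comm (hu 2) (e 0) (e 2) p, hP02 p] at E
      linear_combination E
    -- (1,0)
    · simp only [dd_zero, hdz0, hdz1, mul_zero, zero_mul, add_zero, zero_add] <;> ring
    -- (1,1)
    · simp only [dd_zero, hdz0, hdz1, mul_zero, zero_mul, add_zero, zero_add] <;> ring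
    -- (1,2)
    · have E := hE 2 (e 1) p
      rw [dd_comm (hu 2) (e 1) et p, dd_comm (hu 2) (e 1) (e 0) p,
        dd_comm (hu 2) (e 1) (e 2) p, hP12 p] at E
      linear_combination E
    -- (2,0)
    · rw [hdz0, hdz0, hdz0, hdz0]
      have E := hE 2 (e 0) p
      rw [dd_comm (hu 2) (e 0) et p, dd_comm (hu 2) (e 0) (e 1) p,
        dd_comm (hu 2) (e 0) (e 2) p, hP02 p] at E
      linear_combination -E
    -- (2,1)
    · rw [hdz1, hdz1, hdz1, hdz1]
      have E := hE 2 (e 1) p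
      rw [dd_comm (hu 2) (e 1) et p, dd_comm (hu 2) (e 1) (e 0) p,
        dd_comm (hu 2) (e 1) (e 2) p, hP12 p] at E
      linear_combination -E
    -- (2,2)
    · simp only [dd_zero, hdz0, hdz1, mul_zero, zero_mul, add_zero, zero_add] <;> ring
  · -- sum is the full vorticity
    intro j k p
    rw [hΩh, hΩz]
    fin_cases j <;> fin_cases k <;>
      simp [hz0p p, hz1p p] <;> ring
end
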